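/- Let d ≥ 2. There exists a constant C ≥ 1, depending only on d, such that for every integer k ≥ 1, the number of chambers of the k-th Brillouin zone Bz_k(0, ℤ^d) of the origin in the integer lattice ℤ^d is at most e_{k−1}(d, ⌈C·k⌉), where e_j(d, n) denotes the maximum, over all sets A ⊂ ℝ^d of n points, of the number of j-sets of A. -/

import Mathlib

open Set Metric MeasureTheory

noncomputable section

/-- The integer lattice `ℤ^d` as a subset of `ℝ^d`. -/
def intLattice (d : ℕ) : Set (EuclideanSpace ℝ (Fin d)) :=
  {x | ∀ i, ∃ n : ℤ, x i = (n : ℝ)}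

/-- The canonical embedding of integer vectors into `ℝ^d`. -/
def toEuc (d : ℕ) (a : Fin d → ℤ) : EuclideanSpace ℝ (Fin d) :=
  WithLp.toLp 2 (fun i => (a i : ℝ))

/-- The `k`-th Brillouin zone of `a` in `A`: points `x` such that at most `k-1` points of
`A \ {a}` are strictly closer to `x` than `a`, and at least `k-1` points of `A \ {a}` are
at distance at most `dist x a` from `x`. -/
def brillouinZone (d k : ℕ) (A : Set (EuclideanSpace ℝ (Fin d)))
    (a : EuclideanSpace ℝ (Fin d)) : Set (EuclideanSpace ℝ (Fin d)) :=
  {x | {p | p ∈ A \ {a} ∧ dist x p < dist x a}.encard ≤ ((k - 1 : ℕ) : ℕ∞) ∧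
       ((k - 1 : ℕ) : ℕ∞) ≤ {p | p ∈ A \ {a} ∧ dist x p ≤ dist x a}.encard}

/-- The set of points with exactly `k-1` points of `A \ {a}` strictly closer than `a` and
no point of `A \ {a}` at exactly distance `dist x a`; its connected components are the
chambers of the `k`-th Brillouin zone. -/
def chamberRegion (d k : ℕ) (A : Set (EuclideanSpace ℝ (Fin d)))
    (a : EuclideanSpace ℝ (Fin d)) : Set (EuclideanSpace ℝ (Fin d)) :=
  {x | {p | p ∈ A \ {a} ∧ dist x p < dist x a}.encard = ((k - 1 : ℕ) : ℕ∞) ∧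
       ∀ p ∈ A \ {a}, dist x p ≠ dist x a}

/-- The chambers of the `k`-th Brillouin zone of `a` in `A`. -/
def chambers (d k : ℕ) (A : Set (EuclideanSpace ℝ (Fin d)))
    (a : EuclideanSpace ℝ (Fin d)) : Set (Set (EuclideanSpace ℝ (Fin d))) :=
  {C | ∃ x ∈ chamberRegion d k A a, C = connectedComponentIn (chamberRegion d k A a) x}

/-- `ν_d`, the volume of the unit ball in `ℝ^d`. -/
def unitBallVol (d : ℕ) : ℝ := Real.pi ^ ((d : ℝ) / 2) / Real.Gamma ((d : ℝ) / 2 + 1)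

/-- The number of `j`-sets of a finite set `A ⊂ ℝ^d`: subsets of size `j` that can be cut
off by an open half-space. -/
def numJSets (d j : ℕ) (A : Finset (EuclideanSpace ℝ (Fin d))) : ℕ :=
  {S : Finset (EuclideanSpace ℝ (Fin d)) | S ⊆ A ∧ S.card = j ∧
    ∃ v : EuclideanSpace ℝ (Fin d), v ≠ 0 ∧ ∃ c : ℝ,
      (S : Set (EuclideanSpace ℝ (Fin d)))
        = (A : Set (EuclideanSpace ℝ (Fin d))) ∩ {x | c < (inner ℝ v x : ℝ)}}.ncard

/-- `e_j(d, n)`: the maximum number of `j`-sets over all `n`-point subsets of `ℝ^d`. -/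
def maxJSets (d j n : ℕ) : ℕ :=
  sSup {m | ∃ A : Finset (EuclideanSpace ℝ (Fin d)), A.card = n ∧ m = numJSets d j A}

namespace BZ

open scoped Classical

abbrev Ed (d : ℕ) := EuclideanSpace ℝ (Fin d)

variable {d : ℕ}

/-- The set of lattice points strictly closer to `x` than the origin. -/
def closer (d : ℕ) (x : Ed d) : Set (Ed d) :=
  {p | p ∈ intLattice d \ {0} ∧ dist x p < dist x 0}

/-- The (convex) cell of points whose closer-set is exactly `T`, with no ties. -/
def region (d : ℕ) (T : Set (Ed d)) : Set (Ed d) :=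
  {x | (∀ p ∈ T, dist x p < dist x 0) ∧
       ∀ p ∈ intLattice d \ ({0} : Set (Ed d)), p ∉ T → dist x 0 < dist x p}

lemma cr_eq (k : ℕ) :
    chamberRegion d k (intLattice d) 0 =
      {x | (closer d x).encard = ((k - 1 : ℕ) : ℕ∞) ∧
           ∀ p ∈ intLattice d \ ({0} : Set (Ed d)), dist x p ≠ dist x 0} := rfl

lemma dist_lt_iff (x p : Ed d) :
    dist x p < dist x 0 ↔ ‖p‖ ^ 2 < 2 * (inner ℝ x p : ℝ) := by
  rw [dist_eq_norm, dist_eq_norm, sub_zero,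
    ← pow_lt_pow_iff_left₀ (norm_nonneg (x - p)) (norm_nonneg x) (two_ne_zero),
    norm_sub_sq_real]
  constructor <;> intro h <;> nlinarith

lemma dist_gt_iff (x p : Ed d) :
    dist x 0 < dist x p ↔ 2 * (inner ℝ x p : ℝ) < ‖p‖ ^ 2 := by
  rw [dist_eq_norm, dist_eq_norm, sub_zero,
    ← pow_lt_pow_iff_left₀ (norm_nonneg x) (norm_nonneg (x - p)) (two_ne_zero),
    norm_sub_sq_real]
  constructor <;> intro h <;> nlinarith

lemma closer_subset (x : Ed d) : closer d x ⊆ intLattice d \ ({0} : Set (Ed d)) :=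
  fun _ hp => hp.1

lemma region_closer {T : Set (Ed d)} (hT : T ⊆ intLattice d \ ({0} : Set (Ed d)))
    {x : Ed d} (hx : x ∈ region d T) : closer d x = T := by
  ext p
  constructor
  · rintro ⟨hp1, hp2⟩
    by_contra hpT
    have := hx.2 p hp1 hpT
    linarith
  · intro hpT
    exact ⟨hT hpT, hx.1 p hpT⟩

end BZ
namespace BZ
variable {d : ℕ}

lemma mem_region_self {k : ℕ} {x : Ed d}
    (hx : x ∈ chamberRegion d k (intLattice d) 0) : x ∈ region d (closer d x) := by
  rw [cr_eq] at hx
  refine ⟨fun p hp => hp.2, fun p hp hpc => ?_⟩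
  rcases lt_trichotomy (dist x 0) (dist x p) with h | h | h
  · exact h
  · exact absurd h.symm (hx.2 p hp)
  · exact absurd ⟨hp, h⟩ hpc

lemma isLinear_inner (p : Ed d) :
    IsLinearMap ℝ (fun x : Ed d => 2 * (inner ℝ x p : ℝ)) := by
  constructor
  · intro a b; rw [inner_add_left]; ring
  · intro c a; rw [real_inner_smul_left]; simp; ring

lemma region_convex (T : Set (Ed d)) : Convex ℝ (region d T) := by
  have h1 : region d T =
      (⋂ p ∈ T, {x : Ed d | ‖p‖ ^ 2 < 2 * (inner ℝ x p : ℝ)}) ∩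
      (⋂ p ∈ (intLattice d \ ({0} : Set (Ed d))), ⋂ (_ : p ∉ T),
        {x : Ed d | 2 * (inner ℝ x p : ℝ) < ‖p‖ ^ 2}) := by
    ext x
    simp only [region, Set.mem_setOf_eq, Set.mem_inter_iff, Set.mem_iInter]
    constructor
    · rintro ⟨h1, h2⟩
      exact ⟨fun p hp => (dist_lt_iff x p).1 (h1 p hp),
             fun p hp hpT => (dist_gt_iff x p).1 (h2 p hp hpT)⟩
    · rintro ⟨h1, h2⟩
      exact ⟨fun p hp => (dist_lt_iff x p).2 (h1 p hp),
             fun p hp hpT => (dist_gt_iff x p).2 (h2 p hp hpT)⟩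
  rw [h1]
  refine Convex.inter (convex_iInter₂ fun p _ => ?_)
    (convex_iInter₂ fun p _ => convex_iInter fun _ => ?_)
  · exact convex_halfSpace_gt (isLinear_inner p) _
  · exact convex_halfSpace_lt (isLinear_inner p) _

lemma coord_abs_le_norm (x : Ed d) (i : Fin d) : |x i| ≤ ‖x‖ := by
  rw [EuclideanSpace.norm_eq]
  have h1 : |x i| = Real.sqrt (‖x i‖ ^ 2) := by
    rw [Real.norm_eq_abs, Real.sqrt_sq_eq_abs, abs_abs]
  rw [h1]
  exact Real.sqrt_le_sqrt
    (Finset.single_le_sum (f := fun j => ‖x j‖ ^ 2) (fun j _ => sq_nonneg _)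
      (Finset.mem_univ i))

lemma one_le_norm_lattice {p : Ed d} (hp : p ∈ intLattice d) (h0 : p ≠ 0) :
    1 ≤ ‖p‖ := by
  have hex : ∃ i, p i ≠ 0 := by
    by_contra h
    push_neg at h
    exact h0 (PiLp.ext fun i => h i)
  obtain ⟨i, hi⟩ := hex
  obtain ⟨n, hn⟩ := hp i
  have hn0 : n ≠ 0 := by
    rintro rfl
    exact hi (by simpa using hn)
  have h1 : (1 : ℝ) ≤ |p i| := by
    rw [hn]
    have : (1 : ℤ) ≤ |n| := Int.one_le_abs hn0
    calc (1:ℝ) = ((1:ℤ):ℝ) := by norm_num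
    _ ≤ ((|n| : ℤ) : ℝ) := by exact_mod_cast this
    _ = |(n:ℝ)| := by push_cast; ring
  exact h1.trans (coord_abs_le_norm p i)

lemma lattice_ball_finite (d : ℕ) (r : ℝ) :
    {p : Ed d | p ∈ intLattice d ∧ ‖p‖ ≤ r}.Finite := by
  classical
  set M : ℕ := ⌈r⌉₊ with hM
  have hG : ({g : Fin d → ℤ | ∀ i, g i ∈ Set.Icc (-(M:ℤ)) (M:ℤ)}).Finite := by
    have := Set.Finite.pi (fun _ : Fin d => Set.finite_Icc (-(M:ℤ)) (M:ℤ))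
    refine this.subset ?_
    intro g hg
    simp only [Set.mem_pi, Set.mem_univ, forall_true_left]
    intro i
    exact hg i
  refine Set.Finite.subset (hG.image (toEuc d)) ?_
  rintro p ⟨hp, hpr⟩
  have hcoord : ∀ i, ∃ n : ℤ, p i = n := hp
  refine ⟨fun i => ⌊p i⌋, fun i => ?_, ?_⟩
  · obtain ⟨n, hn⟩ := hcoord i
    have hfl : ⌊p i⌋ = n := by rw [hn]; exact Int.floor_intCast n
    have habs : |p i| ≤ (M : ℝ) := (coord_abs_le_norm p i).trans (hpr.trans (Nat.le_ceil r))
    show ⌊p i⌋ ∈ Set.Icc (-(M:ℤ)) (M:ℤ)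
    rw [Set.mem_Icc, hfl]
    rw [hn] at habs
    have := abs_le.1 habs
    constructor
    · exact (Int.cast_le (R := ℝ)).mp (by push_cast; linarith [this.1])
    · exact (Int.cast_le (R := ℝ)).mp (by push_cast; linarith [this.2])
  · refine PiLp.ext fun i => ?_
    obtain ⟨n, hn⟩ := hcoord i
    have hfl : ⌊p i⌋ = n := by rw [hn]; exact Int.floor_intCast n
    show ((⌊p i⌋ : ℤ) : ℝ) = p i
    rw [hfl, hn]

end BZ
namespace BZ
variable {d : ℕ}

lemma lattice_ball_ncard (d : ℕ) (r : ℝ) :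
    {p : Ed d | p ∈ intLattice d ∧ ‖p‖ ≤ r}.ncard ≤ (2 * ⌈r⌉₊ + 1) ^ d := by
  classical
  set M : ℕ := ⌈r⌉₊ with hM
  set G : Finset (Fin d → ℤ) := Fintype.piFinset fun _ => Finset.Icc (-(M:ℤ)) (M:ℤ) with hG
  have hsub : {p : Ed d | p ∈ intLattice d ∧ ‖p‖ ≤ r} ⊆ toEuc d '' ↑G := by
    rintro p ⟨hp, hpr⟩
    refine ⟨fun i => ⌊p i⌋, ?_, ?_⟩
    · rw [Finset.mem_coe, hG, Fintype.mem_piFinset]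
      intro i
      obtain ⟨n, hn⟩ := hp i
      have hfl : ⌊p i⌋ = n := by rw [hn]; exact Int.floor_intCast n
      have habs : |p i| ≤ (M : ℝ) := (coord_abs_le_norm p i).trans (hpr.trans (Nat.le_ceil r))
      rw [Finset.mem_Icc, hfl]
      rw [hn] at habs
      have h2 := abs_le.1 habs
      constructor
      · exact (Int.cast_le (R := ℝ)).mp (by push_cast; linarith [h2.1])
      · exact (Int.cast_le (R := ℝ)).mp (by push_cast; linarith [h2.2])
    · refine PiLp.ext fun i => ?_
      obtain ⟨n, hn⟩ := hp i
      have hfl : ⌊p i⌋ = n := by rw [hn]; exact Int.floor_intCast n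
      show ((⌊p i⌋ : ℤ) : ℝ) = p i
      rw [hfl, hn]
  have h1 := Set.ncard_le_ncard hsub ((G.finite_toSet).image _)
  have h2 : (toEuc d '' ↑G).ncard ≤ (↑G : Set (Fin d → ℤ)).ncard :=
    Set.ncard_image_le G.finite_toSet
  have h3 : (↑G : Set (Fin d → ℤ)).ncard = G.card := Set.ncard_coe_finset G
  have h4 : G.card = (2 * M + 1) ^ d := by
    rw [hG, Fintype.card_piFinset]
    have : ∀ i : Fin d, (Finset.Icc (-(M:ℤ)) (M:ℤ)).card = 2 * M + 1 := by
      intro i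
      rw [Int.card_Icc]
      omega
    rw [Finset.prod_congr rfl (fun i _ => this i), Finset.prod_const,
      Finset.card_univ, Fintype.card_fin]
  omega

lemma region_isOpen {T : Set (Ed d)} (hT : T.Finite) : IsOpen (region d T) := by
  rw [isOpen_iff_mem_nhds]
  intro x hx
  set F : Set (Ed d) := {p | p ∈ intLattice d ∧ ‖p‖ ≤ 2 * ‖x‖ + 3} with hF
  have hFfin : F.Finite := lattice_ball_finite d _
  set W : Set (Ed d) := (F \ ({0} : Set (Ed d))) \ T with hW
  have hWfin : W.Finite := (hFfin.diff).diff
  set U : Set (Ed d) := (Metric.ball x 1 ∩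
      (⋂ p ∈ T, {y : Ed d | dist y p < dist y 0})) ∩
      (⋂ p ∈ W, {y : Ed d | dist y 0 < dist y p}) with hU
  have hop : ∀ p : Ed d, IsOpen {y : Ed d | dist y p < dist y 0} ∧
      IsOpen {y : Ed d | dist y 0 < dist y p} := by
    intro p
    constructor <;>
      exact isOpen_lt (Continuous.dist continuous_id continuous_const)
        (Continuous.dist continuous_id continuous_const)
  have hUopen : IsOpen U := by
    refine IsOpen.inter (IsOpen.inter Metric.isOpen_ball ?_) ?_
    · exact hT.isOpen_biInter fun p _ => (hop p).1
    · exact hWfin.isOpen_biInter fun p _ => (hop p).2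
  have hxU : x ∈ U := by
    refine ⟨⟨Metric.mem_ball_self one_pos, ?_⟩, ?_⟩
    · exact Set.mem_iInter₂.2 fun p hp => hx.1 p hp
    · refine Set.mem_iInter₂.2 fun p hp => ?_
      exact hx.2 p ⟨hp.1.1.1, hp.1.2⟩ hp.2
  have hUsub : U ⊆ region d T := by
    rintro y ⟨⟨hy1, hy2⟩, hy3⟩
    constructor
    · exact fun p hp => Set.mem_iInter₂.1 hy2 p hp
    · intro p hp hpT
      by_cases hpF : ‖p‖ ≤ 2 * ‖x‖ + 3
      · exact Set.mem_iInter₂.1 hy3 p ⟨⟨⟨hp.1, hpF⟩, hp.2⟩, hpT⟩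
      · push_neg at hpF
        have hyx : dist y x < 1 := Metric.mem_ball.1 hy1
        have h0 : dist y 0 = ‖y‖ := by simp [dist_eq_norm]
        have h1 : ‖y‖ ≤ ‖x‖ + 1 := by
          have := norm_sub_norm_le y x
          rw [← dist_eq_norm] at this
          linarith
        have h2 : ‖p‖ - ‖y‖ ≤ dist y p := by
          have := norm_sub_norm_le p y
          rw [← dist_eq_norm, dist_comm] at this
          linarith
        rw [h0]
        linarith
  exact mem_nhds_iff.2 ⟨U, hUsub, hUopen, hxU⟩

end BZ
namespace BZ
variable {d : ℕ}

lemma rpow_pow (k d : ℕ) (hd : d ≠ 0) : (((k:ℝ)) ^ ((1:ℝ)/d)) ^ (d:ℕ) = k := by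
  rw [← Real.rpow_natCast ((k:ℝ) ^ ((1:ℝ)/d)) d, ← Real.rpow_mul (Nat.cast_nonneg k),
    one_div, inv_mul_cancel₀ (by exact_mod_cast hd : (d:ℝ) ≠ 0), Real.rpow_one]

lemma norm_le_of_mem_cr {k : ℕ} (hd : 1 ≤ d) (hk : 1 ≤ k) {x : Ed d}
    (hx : x ∈ chamberRegion d k (intLattice d) 0) :
    ‖x‖ ≤ 4 * Real.sqrt d * (k:ℝ) ^ ((1:ℝ)/d) := by
  by_contra hcon
  push_neg at hcon
  have hsd : (1:ℝ) ≤ Real.sqrt d := by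
    rw [show (1:ℝ) = Real.sqrt 1 from (Real.sqrt_one).symm]
    exact Real.sqrt_le_sqrt (by exact_mod_cast hd)
  have hk1 : (1:ℝ) ≤ (k:ℝ) ^ ((1:ℝ)/d) := by
    calc (1:ℝ) = (1:ℝ) ^ ((1:ℝ)/d) := (Real.one_rpow _).symm
    _ ≤ (k:ℝ) ^ ((1:ℝ)/d) :=
      Real.rpow_le_rpow zero_le_one (by exact_mod_cast hk) (by positivity)
  set t : ℝ := ‖x‖ / (4 * Real.sqrt d) with ht
  have hsd0 : (0:ℝ) < Real.sqrt d := by linarith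
  have ht1 : (k:ℝ) ^ ((1:ℝ)/d) < t := by
    rw [ht, lt_div_iff₀ (by linarith)]
    nlinarith
  have ht1' : (1:ℝ) < t := lt_of_le_of_lt hk1 ht1
  set L : ℕ := ⌊2*t⌋₊ with hL
  have hLt : t ≤ (L:ℝ) := by
    have := Nat.sub_one_lt_floor (2*t)
    linarith
  have hL2t : (L:ℝ) ≤ 2*t := Nat.floor_le (by linarith)
  set c : Ed d := (2:ℝ)⁻¹ • x with hc
  set base : Fin d → ℤ := fun i => ⌈c i - t⌉ with hbase
  set ψ : (Fin d → Fin L) → Ed d := fun f => toEuc d (fun i => base i + (f i : ℤ)) with hψ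
  have hψi : ∀ (f : Fin d → Fin L) (i : Fin d),
      ψ f i = (base i : ℝ) + ((f i : ℕ) : ℝ) := by
    intro f i
    show ((base i + ((f i : ℕ) : ℤ) : ℤ) : ℝ) = _
    push_cast
    ring
  have hcoord : ∀ (f : Fin d → Fin L) (i : Fin d), |ψ f i - c i| ≤ t := by
    intro f i
    have h1 : (c i - t) ≤ (base i : ℝ) := Int.le_ceil _
    have h2 : (base i : ℝ) < c i - t + 1 := Int.ceil_lt_add_one _
    have h3 : (0:ℝ) ≤ ((f i : ℕ) : ℝ) := by positivity
    have h4 : ((f i : ℕ) : ℝ) ≤ (L:ℝ) - 1 := by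
      have hlt := (f i).isLt
      have : ((f i : ℕ) : ℝ) < (L : ℝ) := by exact_mod_cast hlt
      have hint : ((f i : ℕ) : ℝ) + 1 ≤ (L:ℝ) := by exact_mod_cast hlt
      linarith
    rw [hψi, abs_le]
    constructor
    · linarith
    · linarith
  have hmem : ∀ f, ψ f ∈ closer d x := by
    intro f
    have hlat : ψ f ∈ intLattice d := fun i => ⟨base i + (f i : ℤ), rfl⟩
    have hxpos : (0:ℝ) < ‖x‖ := by nlinarith
    have hdist : dist x (ψ f) < dist x 0 := by
      have hsum : ∑ i, ‖(ψ f - c) i‖^2 ≤ (d:ℝ) * t^2 := by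
        have hstep : ∀ i ∈ Finset.univ, ‖(ψ f - c) i‖^2 ≤ t^2 := by
          intro i _
          have hsub : (ψ f - c) i = ψ f i - c i := rfl
          rw [hsub, Real.norm_eq_abs]
          exact pow_le_pow_left₀ (abs_nonneg _) (hcoord f i) 2
        have := Finset.sum_le_sum hstep
        have hconst : ∑ _i : Fin d, t^2 = (d:ℝ) * t^2 := by
          rw [Finset.sum_const, Finset.card_univ, Fintype.card_fin, nsmul_eq_mul]
        linarith
      have hnc : ‖ψ f - c‖ ≤ Real.sqrt d * t := by
        rw [EuclideanSpace.norm_eq]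
        have h1 := Real.sqrt_le_sqrt hsum
        have h2 : Real.sqrt ((d:ℝ)*t^2) = Real.sqrt d * t := by
          rw [Real.sqrt_mul (by positivity), Real.sqrt_sq (by linarith)]
        rw [h2] at h1
        exact h1
      have hxc : ‖x - c‖ = ‖x‖/2 := by
        have hxx : x - c = (2:ℝ)⁻¹ • x := by rw [hc]; module
        rw [hxx, norm_smul]
        simp
        ring
      have htri : dist x (ψ f) ≤ dist x c + dist c (ψ f) := dist_triangle x c (ψ f)
      have hd1 : dist x c = ‖x - c‖ := dist_eq_norm x c
      have hd2 : dist c (ψ f) = ‖ψ f - c‖ := by rw [dist_eq_norm, norm_sub_rev]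
      have hd0 : dist x 0 = ‖x‖ := by simp [dist_eq_norm]
      have hsdt : Real.sqrt d * t = ‖x‖/4 := by
        rw [ht]
        field_simp
      rw [hd0]
      rw [hsdt] at hnc
      rw [hd1, hxc] at htri
      rw [hd2] at htri
      linarith
    have hne : ψ f ≠ 0 := by
      rintro h0
      rw [h0] at hdist
      exact absurd hdist (lt_irrefl _)
    exact ⟨⟨hlat, hne⟩, hdist⟩
  have hinj : Function.Injective ψ := by
    intro f g hfg
    funext i
    have h1 : ψ f i = ψ g i := congrFun (congrArg WithLp.ofLp hfg) i
    rw [hψi, hψi] at h1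
    have h2 : ((f i : ℕ) : ℝ) = ((g i : ℕ) : ℝ) := by linarith
    exact Fin.ext (by exact_mod_cast h2)
  have hcard : ((L ^ d : ℕ) : ℕ∞) ≤ ((k - 1 : ℕ) : ℕ∞) := by
    rw [cr_eq] at hx
    rw [← hx.1]
    calc ((L^d : ℕ) : ℕ∞) = (Set.univ : Set (Fin d → Fin L)).encard := by
          rw [Set.encard_univ, ENat.card_eq_coe_fintype_card]
          simp
    _ = (ψ '' Set.univ).encard := ((hinj.injOn).encard_image).symm
    _ ≤ (closer d x).encard := Set.encard_le_encard (by rintro y ⟨f, _, rfl⟩; exact hmem f)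
  have hcard' : L ^ d ≤ k - 1 := by exact_mod_cast hcard
  have h2 : ((k:ℝ) ^ ((1:ℝ)/d))^(d:ℕ) < t^(d:ℕ) :=
    pow_lt_pow_left₀ ht1 (by positivity) (by omega)
  have h3 : t^(d:ℕ) ≤ (L:ℝ)^(d:ℕ) := pow_le_pow_left₀ (by linarith) hLt d
  have h1 : (k:ℝ) = ((k:ℝ) ^ ((1:ℝ)/d))^(d:ℕ) := (rpow_pow k d (by omega)).symm
  have h4 : ((L^d : ℕ):ℝ) ≤ ((k-1 : ℕ):ℝ) := by exact_mod_cast hcard'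
  have h5 : ((k-1:ℕ):ℝ) = (k:ℝ) - 1 := by
    rw [Nat.cast_sub hk]
    norm_num
  push_cast at h4
  rw [h5] at h4
  linarith

end BZ
namespace BZ
open scoped Classical
variable {d : ℕ}

def inv' (p : Ed d) : Ed d := (‖p‖^2)⁻¹ • p

lemma norm_inv' {p : Ed d} (hp : p ≠ 0) : ‖inv' p‖ = ‖p‖⁻¹ := by
  have h0 : ‖p‖ ≠ 0 := norm_ne_zero_iff.2 hp
  rw [inv', norm_smul, Real.norm_eq_abs, abs_of_nonneg (inv_nonneg.2 (sq_nonneg _))]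
  field_simp

lemma inv'_inv' {p : Ed d} (hp : p ≠ 0) : inv' (inv' p) = p := by
  have h0 : ‖p‖ ≠ 0 := norm_ne_zero_iff.2 hp
  have h1 : ‖inv' p‖ = ‖p‖⁻¹ := norm_inv' hp
  rw [inv', h1, inv', smul_smul]
  have h2 : ((‖p‖⁻¹ ^ 2)⁻¹ * (‖p‖ ^ 2)⁻¹ : ℝ) = 1 := by field_simp
  rw [h2, one_smul]

lemma inv'_ne_zero {p : Ed d} (hp : p ≠ 0) : inv' p ≠ 0 := by
  have h0 : ‖p‖ ≠ 0 := norm_ne_zero_iff.2 hp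
  rw [← norm_ne_zero_iff, norm_inv' hp]
  exact inv_ne_zero h0

lemma inv'_injOn : Set.InjOn (inv' (d := d)) {p | p ≠ 0} := by
  intro p hp q hq h
  have := congrArg inv' h
  rwa [inv'_inv' hp, inv'_inv' hq] at this

lemma inv'_image_image {T : Set (Ed d)} (hT : ∀ p ∈ T, p ≠ (0 : Ed d)) :
    inv' '' (inv' '' T) = T := by
  rw [Set.image_image]
  have h1 : ∀ p ∈ T, inv' (inv' p) = p := fun p hp => inv'_inv' (hT p hp)
  rw [Set.image_congr h1, Set.image_id']

lemma half_lt_inner_inv'_iff (x : Ed d) {p : Ed d} (hp : p ≠ 0) :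
    1/2 < (inner ℝ x (inv' p) : ℝ) ↔ dist x p < dist x 0 := by
  rw [dist_lt_iff, inv', real_inner_smul_right]
  have h0 : ‖p‖ ≠ 0 := norm_ne_zero_iff.2 hp
  have h2 : (0:ℝ) < ‖p‖^2 := by positivity
  rw [inv_mul_eq_div, lt_div_iff₀ h2]
  constructor <;> intro h <;> linarith

def jmap (d : ℕ) (x : Ed d) : Finset (Ed d) :=
  if h : (closer d x).Finite then h.toFinset.image inv' else ∅

def Gmap (d : ℕ) (U : Set (Ed d)) : Finset (Ed d) :=
  if h : U.Nonempty then jmap d h.some else ∅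

lemma closer_finite {k : ℕ} {x : Ed d}
    (hx : x ∈ chamberRegion d k (intLattice d) 0) : (closer d x).Finite := by
  rw [cr_eq] at hx
  exact Set.finite_of_encard_eq_coe hx.1

lemma jmap_coe {x : Ed d} (h : (closer d x).Finite) :
    ↑(jmap d x) = inv' '' (closer d x) := by
  rw [jmap, dif_pos h, Finset.coe_image, Set.Finite.coe_toFinset]

lemma region_sub_cr {k : ℕ} {x : Ed d} (hx : x ∈ chamberRegion d k (intLattice d) 0) :
    region d (closer d x) ⊆ chamberRegion d k (intLattice d) 0 := by
  intro y hy
  have hc : closer d y = closer d x := region_closer (closer_subset x) hy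
  rw [cr_eq] at hx ⊢
  refine ⟨by rw [hc]; exact hx.1, ?_⟩
  intro p hp
  by_cases hpc : p ∈ closer d x
  · exact ne_of_lt (hy.1 p hpc)
  · exact ne_of_gt (hy.2 p hp hpc)

lemma component_eq {k : ℕ} {x : Ed d} (hx : x ∈ chamberRegion d k (intLattice d) 0) :
    connectedComponentIn (chamberRegion d k (intLattice d) 0) x
      = region d (closer d x) := by
  have hfin := closer_finite hx
  have hxr := mem_region_self hx
  apply Set.Subset.antisymm
  · set U : Set (Ed d) := ⋃ y ∈ {y | y ∈ chamberRegion d k (intLattice d) 0 ∧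
      closer d y ≠ closer d x}, region d (closer d y) with hU
    have hUopen : IsOpen U := isOpen_biUnion fun y hy => region_isOpen (closer_finite hy.1)
    have hdisj : Disjoint (region d (closer d x)) U := by
      rw [Set.disjoint_left]
      rintro z hz hzU
      obtain ⟨y, hy, hzy⟩ := Set.mem_iUnion₂.1 hzU
      have h1 : closer d z = closer d x := region_closer (closer_subset x) hz
      have h2 : closer d z = closer d y := region_closer (closer_subset y) hzy
      exact hy.2 (h2 ▸ h1)
    have hcover : chamberRegion d k (intLattice d) 0 ⊆ region d (closer d x) ∪ U := by
      intro y hy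
      by_cases h : closer d y = closer d x
      · left; rw [← h]; exact mem_region_self hy
      · right; exact Set.mem_biUnion ⟨hy, h⟩ (mem_region_self hy)
    exact IsPreconnected.subset_left_of_subset_union (region_isOpen hfin) hUopen hdisj
      ((connectedComponentIn_subset _ _).trans hcover)
      ⟨x, mem_connectedComponentIn hx, hxr⟩
      (isPreconnected_connectedComponentIn)
  · exact IsPreconnected.subset_connectedComponentIn
      ((region_convex _).isPreconnected) hxr (region_sub_cr hx)

lemma chambers_eq (k : ℕ) :
    chambers d k (intLattice d) 0 =
      (fun x => region d (closer d x)) '' (chamberRegion d k (intLattice d) 0) := by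
  ext C
  constructor
  · rintro ⟨x, hx, rfl⟩
    exact ⟨x, hx, (component_eq hx).symm⟩
  · rintro ⟨x, hx, rfl⟩
    exact ⟨x, hx, (component_eq hx).symm⟩

lemma Gmap_region {k : ℕ} {x : Ed d} (hx : x ∈ chamberRegion d k (intLattice d) 0) :
    Gmap d (region d (closer d x)) = jmap d x := by
  have hne : (region d (closer d x)).Nonempty := ⟨x, mem_region_self hx⟩
  rw [Gmap, dif_pos hne]
  have h2 : closer d hne.some = closer d x :=
    region_closer (closer_subset x) hne.some_mem
  have hf1 : (closer d hne.some).Finite := closer_finite (region_sub_cr hx hne.some_mem)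
  rw [jmap, dif_pos hf1, jmap, dif_pos (closer_finite hx)]
  congr 1
  ext p
  simp only [Set.Finite.mem_toFinset, h2]

end BZ

/-- There is a constant `C ≥ 1`, depending only on `d`, such that for every
`k ≥ 1` the number of chambers of the `k`-th Brillouin zone of `0 ∈ ℤ^d` is at most
`e_{k-1}(d, ⌈C·k⌉)`. -/
theorem chambers_le_ksets (d : ℕ) (hd : 2 ≤ d) :
    ∃ C : ℝ, 1 ≤ C ∧ ∀ k : ℕ, 1 ≤ k →
      (chambers d k (intLattice d) 0).encard
        ≤ ((maxJSets d (k - 1) ⌈C * (k : ℝ)⌉₊ : ℕ) : ℕ∞) := by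
  classical
  have hd1 : 1 ≤ d := le_trans one_le_two hd
  have hsd : (1:ℝ) ≤ Real.sqrt d := by
    rw [show (1:ℝ) = Real.sqrt 1 from (Real.sqrt_one).symm]
    exact Real.sqrt_le_sqrt (by exact_mod_cast hd1)
  refine ⟨(24 * Real.sqrt d)^d, ?_, ?_⟩
  · have h24 : (1:ℝ) ≤ 24 * Real.sqrt d := by nlinarith
    calc (1:ℝ) = 1^d := (one_pow d).symm
    _ ≤ (24*Real.sqrt d)^d := pow_le_pow_left₀ zero_le_one h24 d
  intro k hk
  set C : ℝ := (24*Real.sqrt d)^d with hC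
  set n : ℕ := ⌈C * (k:ℝ)⌉₊ with hn
  set cr : Set (BZ.Ed d) := chamberRegion d k (intLattice d) 0 with hcrdef
  set ρ : ℝ := 4 * Real.sqrt d * (k:ℝ)^((1:ℝ)/d) with hρ
  have hk1 : (1:ℝ) ≤ (k:ℝ)^((1:ℝ)/d) := by
    calc (1:ℝ) = (1:ℝ) ^ ((1:ℝ)/d) := (Real.one_rpow _).symm
    _ ≤ (k:ℝ) ^ ((1:ℝ)/d) :=
      Real.rpow_le_rpow zero_le_one (by exact_mod_cast hk) (by positivity)
  have hρ4 : 4 ≤ ρ := by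
    have h1 : (1:ℝ)*1 ≤ Real.sqrt d * (k:ℝ)^((1:ℝ)/d) :=
      mul_le_mul hsd hk1 zero_le_one (le_trans zero_le_one hsd)
    rw [hρ]
    nlinarith
  set R : ℝ := 2*ρ with hR
  have hR8 : 8 ≤ R := by rw [hR]; linarith
  have hR0 : 0 < R := by linarith
  have hρnorm : ∀ x ∈ cr, ‖x‖ ≤ ρ := fun x hx => BZ.norm_le_of_mem_cr hd1 hk hx
  -- lattice points in the ball of radius R
  set SR : Set (BZ.Ed d) := {p : BZ.Ed d | p ∈ intLattice d ∧ ‖p‖ ≤ R} with hSR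
  have hSRfin : SR.Finite := BZ.lattice_ball_finite d R
  set Λ : Set (BZ.Ed d) := SR \ {0} with hΛ
  have hΛfin : Λ.Finite := hSRfin.diff
  set B : Finset (BZ.Ed d) := hΛfin.toFinset with hB
  set B' : Finset (BZ.Ed d) := B.image BZ.inv' with hB'
  -- cardinality bound for B
  have hcount : (SR.ncard : ℝ) ≤ C * k := by
    have h1' : (SR.ncard : ℝ) ≤ (2*(⌈R⌉₊:ℝ)+1)^d := by
      exact_mod_cast BZ.lattice_ball_ncard d R
    have h2 : 2*(⌈R⌉₊:ℝ)+1 ≤ 3*R := by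
      have := Nat.ceil_lt_add_one (le_of_lt hR0)
      linarith
    have h3 : (2*(⌈R⌉₊:ℝ)+1)^d ≤ (3*R)^d := pow_le_pow_left₀ (by positivity) h2 d
    have h4 : (3*R)^d = C * k := by
      rw [hR, hρ, hC]
      have h5 : (3:ℝ) * (2 * (4 * Real.sqrt d * (k:ℝ)^((1:ℝ)/d)))
          = (24*Real.sqrt d) * (k:ℝ)^((1:ℝ)/d) := by ring
      rw [h5, mul_pow, BZ.rpow_pow k d (by omega)]
    linarith
  have hBn : B.card ≤ n := by
    have hΛS : Λ.ncard ≤ SR.ncard := Set.ncard_le_ncard (Set.diff_subset) hSRfin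
    have hBc : B.card = Λ.ncard := (Set.ncard_eq_toFinset_card Λ hΛfin).symm
    have h1 : (B.card : ℝ) ≤ C * k := by
      rw [hBc]
      calc (Λ.ncard : ℝ) ≤ (SR.ncard : ℝ) := by exact_mod_cast hΛS
      _ ≤ C * k := hcount
    have h2 : (B.card : ℝ) ≤ (n : ℝ) := le_trans h1 (Nat.le_ceil _)
    exact_mod_cast h2
  have hB'n : B'.card ≤ n := le_trans Finset.card_image_le hBn
  -- padding points
  set u : BZ.Ed d := EuclideanSpace.single (⟨0, by omega⟩ : Fin d) (1:ℝ) with hu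
  have hu1 : ‖u‖ = 1 := by rw [hu, EuclideanSpace.norm_single]; norm_num
  set m : ℕ := n - B'.card with hm
  set pad : ℕ → BZ.Ed d := fun j => (R * ((j:ℝ)+2))⁻¹ • u with hpad
  have hpadnorm : ∀ j : ℕ, ‖pad j‖ = (R * ((j:ℝ)+2))⁻¹ := by
    intro j
    rw [hpad]
    simp only
    rw [norm_smul, hu1, mul_one, Real.norm_eq_abs, abs_of_pos (by positivity)]
  set P : Finset (BZ.Ed d) := (Finset.range m).image pad with hP
  have hpadinj : Set.InjOn pad ↑(Finset.range m) := by
    intro j _ j' _ h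
    have h1 := congrArg norm h
    rw [hpadnorm, hpadnorm] at h1
    have hj : (0:ℝ) < R * ((j:ℝ)+2) := by positivity
    have hj' : (0:ℝ) < R * ((j':ℝ)+2) := by positivity
    have h2 : R * ((j:ℝ)+2) = R * ((j':ℝ)+2) := inv_injective h1
    have h3 := mul_left_cancel₀ (ne_of_gt hR0) h2
    exact_mod_cast (show (j:ℝ) = j' by linarith)
  have hPcard : P.card = m := by
    rw [hP, Finset.card_image_of_injOn hpadinj, Finset.card_range]
  have hB'norm : ∀ b ∈ B', (R:ℝ)⁻¹ ≤ ‖b‖ ∧ ‖b‖ ≤ 1 := by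
    intro b hb
    obtain ⟨p, hp, rfl⟩ := Finset.mem_image.1 hb
    have hpΛ : p ∈ Λ := hΛfin.mem_toFinset.1 hp
    have hp0 : p ≠ 0 := hpΛ.2
    have hlat : p ∈ intLattice d := hpΛ.1.1
    have hpR : ‖p‖ ≤ R := hpΛ.1.2
    have h1 : 1 ≤ ‖p‖ := BZ.one_le_norm_lattice hlat hp0
    rw [BZ.norm_inv' hp0]
    constructor
    · exact inv_anti₀ (by linarith) hpR
    · exact inv_le_one_of_one_le₀ h1
  have hdisjBP : Disjoint B' P := by
    rw [Finset.disjoint_left]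
    intro a haB' haP
    obtain ⟨j, _, rfl⟩ := Finset.mem_image.1 haP
    have h1 := (hB'norm _ haB').1
    have h2 : ‖pad j‖ < R⁻¹ := by
      rw [hpadnorm]
      have : R < R * ((j:ℝ)+2) := by nlinarith
      exact inv_strictAnti₀ hR0 this
    linarith
  set A : Finset (BZ.Ed d) := B' ∪ P with hA
  have hAcard : A.card = n := by
    rw [hA, Finset.card_union_of_disjoint hdisjBP, hPcard, hm]
    omega
  have hPsmall : ∀ a ∈ P, ‖a‖ ≤ (2*R)⁻¹ := by
    intro a haP
    obtain ⟨j, _, rfl⟩ := Finset.mem_image.1 haP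
    rw [hpadnorm]
    apply inv_anti₀ (by positivity)
    nlinarith
  have hAnorm : ∀ a ∈ A, ‖a‖ ≤ 1 := by
    intro a ha
    rcases Finset.mem_union.1 ha with h | h
    · exact (hB'norm a h).2
    · have := hPsmall a h
      have h2 : (2*R)⁻¹ ≤ 1 := inv_le_one_of_one_le₀ (by linarith)
      linarith
  -- the family of (k-1)-sets of A
  set Fam : Set (Finset (BZ.Ed d)) := {S : Finset (EuclideanSpace ℝ (Fin d)) | S ⊆ A ∧ S.card = k - 1 ∧
    ∃ v : EuclideanSpace ℝ (Fin d), v ≠ 0 ∧ ∃ c : ℝ,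
      (S : Set (EuclideanSpace ℝ (Fin d)))
        = (A : Set (EuclideanSpace ℝ (Fin d))) ∩ {x | c < (inner ℝ v x : ℝ)}} with hFam
  have hFamCount : Fam.ncard = numJSets d (k-1) A := rfl
  -- key step : jmap of points of the chamber region lies in Fam
  have hmemB' : ∀ p ∈ BZ.closer d (0 : BZ.Ed d) ∪ Λ, True := fun _ _ => trivial
  have hkey : ∀ x ∈ cr, BZ.jmap d x ∈ Fam := by
    intro x hx
    have hfin := BZ.closer_finite hx
    have hnormx : ‖x‖ ≤ ρ := hρnorm x hx
    have hTsub : BZ.closer d x ⊆ Λ := by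
      intro p hp
      refine ⟨⟨hp.1.1, ?_⟩, hp.1.2⟩
      have h1 : dist x p < dist x 0 := hp.2
      have h2 : dist x 0 = ‖x‖ := by simp [dist_eq_norm]
      have h3 : ‖p‖ - ‖x‖ ≤ dist x p := by
        have := norm_sub_norm_le p x
        rw [← dist_eq_norm, dist_comm] at this
        linarith
      show ‖p‖ ≤ R
      rw [hR]
      linarith
    have hjc : ↑(BZ.jmap d x) = BZ.inv' '' (BZ.closer d x) := BZ.jmap_coe hfin
    have hsubA : BZ.jmap d x ⊆ A := by
      intro b hb
      have hb' : b ∈ (↑(BZ.jmap d x) : Set (BZ.Ed d)) := hb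
      rw [hjc] at hb'
      obtain ⟨p, hp, rfl⟩ := hb'
      have hmem : BZ.inv' p ∈ B' :=
        Finset.mem_image.2 ⟨p, hΛfin.mem_toFinset.2 (hTsub hp), rfl⟩
      exact Finset.mem_union_left _ hmem
    have hxx := hx
    rw [hcrdef, BZ.cr_eq] at hxx
    have hcardT : (BZ.jmap d x).card = k - 1 := by
      rw [BZ.jmap, dif_pos hfin]
      rw [Finset.card_image_of_injOn]
      · have h1 : (BZ.closer d x).encard = ((k-1 : ℕ) : ℕ∞) := hxx.1
        have h2 : (BZ.closer d x).encard = (hfin.toFinset.card : ℕ∞) :=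
          hfin.encard_eq_coe_toFinset_card
        rw [h1] at h2
        exact_mod_cast h2.symm
      · intro p hp q hq hpq
        have hp' : p ∈ BZ.closer d x := hfin.mem_toFinset.1 hp
        have hq' : q ∈ BZ.closer d x := hfin.mem_toFinset.1 hq
        exact BZ.inv'_injOn hp'.1.2 hq'.1.2 hpq
    refine ⟨hsubA, hcardT, ?_⟩
    by_cases hx0 : x = 0
    · have hT0 : BZ.closer d x = ∅ := by
        ext p
        simp only [BZ.closer, Set.mem_setOf_eq, Set.mem_empty_iff_false, iff_false, not_and]
        intro _
        rw [hx0, dist_self]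
        exact not_lt.2 dist_nonneg
      refine ⟨u, ?_, 2, ?_⟩
      · rw [← norm_ne_zero_iff, hu1]; norm_num
      · rw [hjc, hT0, Set.image_empty]
        symm
        rw [Set.eq_empty_iff_forall_notMem]
        rintro y ⟨hyA, hyH⟩
        have h1 : (inner ℝ u y : ℝ) ≤ ‖u‖ * ‖y‖ := real_inner_le_norm u y
        have h2 : ‖y‖ ≤ 1 := hAnorm y hyA
        rw [hu1, one_mul] at h1
        have h3 : (2:ℝ) < (inner ℝ u y : ℝ) := hyH
        linarith
    · refine ⟨x, hx0, 1/2, ?_⟩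
      rw [hjc]
      ext y
      simp only [Set.mem_image, Set.mem_inter_iff, Finset.mem_coe, Set.mem_setOf_eq]
      constructor
      · rintro ⟨p, hp, rfl⟩
        constructor
        · exact Finset.mem_union_left _
            (Finset.mem_image.2 ⟨p, hΛfin.mem_toFinset.2 (hTsub hp), rfl⟩)
        · exact (BZ.half_lt_inner_inv'_iff x hp.1.2).2 hp.2
      · rintro ⟨hyA, hyH⟩
        rcases Finset.mem_union.1 hyA with hyB | hyP
        · obtain ⟨p, hpB, rfl⟩ := Finset.mem_image.1 hyB
          have hpΛ : p ∈ Λ := hΛfin.mem_toFinset.1 hpB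
          have hp0 : p ≠ 0 := hpΛ.2
          exact ⟨p, ⟨⟨hpΛ.1.1, hp0⟩, (BZ.half_lt_inner_inv'_iff x hp0).1 hyH⟩, rfl⟩
        · exfalso
          have h1 : (inner ℝ x y : ℝ) ≤ ‖x‖ * ‖y‖ := real_inner_le_norm x y
          have h2 : ‖y‖ ≤ (2*R)⁻¹ := hPsmall y hyP
          have h3 : ‖x‖ * ‖y‖ ≤ ρ * (2*R)⁻¹ :=
            mul_le_mul hnormx h2 (norm_nonneg _) (by linarith)
          have hval : ρ * (2*R)⁻¹ = 1/4 := by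
            rw [hR]
            have hρ0 : ρ ≠ 0 := by linarith
            field_simp
            ring
          have h4 : (1:ℝ)/2 < (inner ℝ x y : ℝ) := hyH
          rw [hval] at h3
          linarith
  -- injectivity of Gmap on chambers
  have hGinj : Set.InjOn (BZ.Gmap d) (chambers d k (intLattice d) 0) := by
    rw [BZ.chambers_eq]
    rintro U ⟨x, hx, rfl⟩ V ⟨y, hy, rfl⟩ hUV
    simp only
    rw [BZ.Gmap_region hx, BZ.Gmap_region hy] at hUV
    have h1 : BZ.inv' '' BZ.closer d x = BZ.inv' '' BZ.closer d y := by
      rw [← BZ.jmap_coe (BZ.closer_finite hx), ← BZ.jmap_coe (BZ.closer_finite hy), hUV]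
    have h2 : BZ.closer d x = BZ.closer d y := by
      have h3 := congrArg (Set.image BZ.inv') h1
      rwa [BZ.inv'_image_image (fun p hp => hp.1.2),
        BZ.inv'_image_image (fun p hp => hp.1.2)] at h3
    rw [h2]
  -- counting
  have hFamFin : Fam.Finite :=
    Set.Finite.subset (A.powerset.finite_toSet)
      (fun S hS => Finset.mem_coe.2 (Finset.mem_powerset.2 hS.1))
  have hchain : (chambers d k (intLattice d) 0).encard ≤ (Fam.ncard : ℕ∞) := by
    have hsub : BZ.Gmap d '' (chambers d k (intLattice d) 0) ⊆ Fam := by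
      rintro _ ⟨U, hU, rfl⟩
      rw [BZ.chambers_eq] at hU
      obtain ⟨x, hx, rfl⟩ := hU
      rw [BZ.Gmap_region hx]
      exact hkey x hx
    calc (chambers d k (intLattice d) 0).encard
        = (BZ.Gmap d '' (chambers d k (intLattice d) 0)).encard :=
          (hGinj.encard_image).symm
    _ ≤ Fam.encard := Set.encard_le_encard hsub
    _ = (Fam.ncard : ℕ∞) := by
          rw [hFamFin.encard_eq_coe_toFinset_card,
            Set.ncard_eq_toFinset_card Fam hFamFin]
  -- relate to maxJSets
  have hle : numJSets d (k-1) A ≤ maxJSets d (k-1) n := by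
    apply le_csSup
    · refine ⟨2^n, ?_⟩
      rintro m' ⟨A', hA', rfl⟩
      have hsub : {S : Finset (EuclideanSpace ℝ (Fin d)) | S ⊆ A' ∧ S.card = k - 1 ∧
          ∃ v : EuclideanSpace ℝ (Fin d), v ≠ 0 ∧ ∃ c : ℝ,
            (S : Set (EuclideanSpace ℝ (Fin d)))
              = (A' : Set (EuclideanSpace ℝ (Fin d))) ∩ {x | c < (inner ℝ v x : ℝ)}}
          ⊆ ↑A'.powerset :=
        fun S hS => Finset.mem_coe.2 (Finset.mem_powerset.2 hS.1)
      calc numJSets d (k-1) A'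
          ≤ (↑A'.powerset : Set (Finset (EuclideanSpace ℝ (Fin d)))).ncard :=
            Set.ncard_le_ncard hsub (A'.powerset.finite_toSet)
      _ = A'.powerset.card := Set.ncard_coe_finset _
      _ = 2^n := by rw [Finset.card_powerset, hA']
    · exact ⟨A, hAcard, rfl⟩
  rw [hFamCount] at hchain
  exact le_trans hchain (by exact_mod_cast hle)

end
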